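/- Let E be a finite set with |E| ≥ 2, let n > 0, let r ≥ 1, and for each e ∈ E let c_e : ℝ_{≥0} → ℝ_{≥0} be continuous and nondecreasing. For s ∈ ℝ_{≥0}^E with Σ_e s_e = n define WCR(e, s) = c_e(r·s_e) − min_{d ≠ e} c_d(s_d/r). Then there exists a state s ∈ ℝ_{≥0}^E with Σ_e s_e = n such that for every e with s_e > 0 and every d ∈ E, WCR(e, s) ≤ WCR(d, s); i.e., a WCR equilibrium of the resource selection game exists. -/

import Mathlib

open Finset

/-- Worst-case regret of resource `e` in state `s` under distance-based uncertainty `r`: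
`WCR(e,s) = c_e(r·s_e) − min_{d ≠ e} c_d(s_d/r)`. -/
noncomputable def WCR {E : Type} [Fintype E] (c : E → ℝ → ℝ) (r : ℝ) (s : E → ℝ)
    (e : E) : ℝ :=
  c e (r * s e) - ⨅ d : { d : E // d ≠ e }, c d.1 (s d.1 / r)

section WFY

variable {n : ℝ} {h : ℝ → ℝ}

/-- The largest load `x ∈ [0,n]` with `h x ≤ lam` (0 if none). -/
noncomputable def wfY (n : ℝ) (h : ℝ → ℝ) (lam : ℝ) : ℝ :=
  sSup {x | x ∈ Set.Icc (0:ℝ) n ∧ h x ≤ lam}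

lemma wfY_le_n (hn : 0 ≤ n) (lam : ℝ) : wfY n h lam ≤ n :=
  Real.sSup_le (fun _ hx => hx.1.2) hn

lemma wfY_nonneg (lam : ℝ) : 0 ≤ wfY n h lam :=
  Real.sSup_nonneg (fun _ hx => hx.1.1)

lemma wfY_bddAbove (lam : ℝ) : BddAbove {x | x ∈ Set.Icc (0:ℝ) n ∧ h x ≤ lam} :=
  ⟨n, fun _ hx => hx.1.2⟩

lemma wfY_isClosed (hc : ContinuousOn h (Set.Ici 0)) (lam : ℝ) :
    IsClosed {x | x ∈ Set.Icc (0:ℝ) n ∧ h x ≤ lam} := by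
  have : {x | x ∈ Set.Icc (0:ℝ) n ∧ h x ≤ lam}
      = Set.Icc (0:ℝ) n ∩ h ⁻¹' Set.Iic lam := rfl
  rw [this]
  exact (hc.mono (fun x hx => hx.1)).preimage_isClosed_of_isClosed isClosed_Icc isClosed_Iic

lemma wfY_mem (hc : ContinuousOn h (Set.Ici 0))
    (hne : {x | x ∈ Set.Icc (0:ℝ) n ∧ h x ≤ lam}.Nonempty) :
    wfY n h lam ∈ {x | x ∈ Set.Icc (0:ℝ) n ∧ h x ≤ lam} :=
  (wfY_isClosed hc lam).csSup_mem hne (wfY_bddAbove lam)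

lemma wfY_mem_of_pos (hc : ContinuousOn h (Set.Ici 0)) (hpos : 0 < wfY n h lam) :
    wfY n h lam ∈ {x | x ∈ Set.Icc (0:ℝ) n ∧ h x ≤ lam} := by
  rcases Set.eq_empty_or_nonempty {x | x ∈ Set.Icc (0:ℝ) n ∧ h x ≤ lam} with he | hne
  · exfalso
    have : wfY n h lam = 0 := by
      unfold wfY; rw [he]; exact Real.sSup_empty
    linarith
  · exact wfY_mem hc hne

lemma wfY_le_of_mem {x lam : ℝ} (hx : x ∈ Set.Icc (0:ℝ) n) (hxl : h x ≤ lam) :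
    x ≤ wfY n h lam :=
  le_csSup (wfY_bddAbove lam) ⟨hx, hxl⟩

lemma wfY_mono {lam lam' : ℝ} (hl : lam ≤ lam') : wfY n h lam ≤ wfY n h lam' :=
  Real.sSup_le (fun x hx => wfY_le_of_mem hx.1 (hx.2.trans hl)) (wfY_nonneg _)

/-- if the maximal load is `< n`, then its cost is at least `lam`. -/
lemma wfY_ge_spec (hc : ContinuousOn h (Set.Ici 0)) (hn : 0 ≤ n)
    {lam : ℝ} (hlt : wfY n h lam < n) : lam ≤ h (wfY n h lam) := by
  by_contra hcon
  push_neg at hcon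
  set W := wfY n h lam with hW
  have hW0 : 0 ≤ W := wfY_nonneg _
  -- h is continuous within Ici 0 at W; h W < lam, so points slightly above W also have h < lam
  have hev : ∀ᶠ x in nhdsWithin W (Set.Ici 0), h x < lam :=
    (hc.continuousWithinAt (Set.mem_Ici.mpr hW0)).eventually_lt_const hcon
  have hmono : nhdsWithin W (Set.Ioi W) ≤ nhdsWithin W (Set.Ici 0) :=
    nhdsWithin_mono _ (fun x hx => le_trans hW0 (le_of_lt hx))
  have hev2 : ∀ᶠ x in nhdsWithin W (Set.Ioi W), h x < lam := hmono hev
  have hev3 : ∀ᶠ x in nhdsWithin W (Set.Ioi W), x < n :=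
    eventually_nhdsWithin_of_eventually_nhds (Filter.Tendsto.eventually_lt_const hlt Filter.tendsto_id)
  have hev4 : ∀ᶠ x in nhdsWithin W (Set.Ioi W), W < x :=
    eventually_mem_nhdsWithin
  obtain ⟨x, hx1, hx2, hx3⟩ := (hev2.and (hev3.and hev4)).exists
  have : x ≤ W := wfY_le_of_mem ⟨le_trans hW0 (le_of_lt hx3), le_of_lt hx2⟩ (le_of_lt hx1)
  linarith

lemma wfY_eq_zero (hsm : StrictMonoOn h (Set.Ici 0)) {lam : ℝ} (hl : lam ≤ h 0) :
    wfY n h lam = 0 := by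
  refine le_antisymm (Real.sSup_le ?_ le_rfl) (wfY_nonneg _)
  intro x hx
  by_contra hxpos
  push_neg at hxpos
  have := hsm (Set.mem_Ici.mpr le_rfl) (Set.mem_Ici.mpr hx.1.1) hxpos
  linarith [hx.2]

lemma wfY_eq_n (hn : 0 ≤ n) {lam : ℝ} (hl : h n ≤ lam) : wfY n h lam = n :=
  le_antisymm (wfY_le_n hn _) (wfY_le_of_mem ⟨hn, le_rfl⟩ hl)

lemma wfY_lt_bound (hsm : StrictMonoOn h (Set.Ici 0)) {lam lam' η : ℝ} (hη : 0 < η)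
    (hl' : lam' < h (wfY n h lam + η)) : wfY n h lam' ≤ wfY n h lam + η := by
  refine Real.sSup_le ?_ (by linarith [wfY_nonneg (h := h) (n := n) lam])
  intro x hx
  by_contra hxgt
  push_neg at hxgt
  have h1 : h (wfY n h lam + η) < h x :=
    hsm (by have := wfY_nonneg (h := h) (n := n) lam; simp; linarith)
      (Set.mem_Ici.mpr hx.1.1) hxgt
  linarith [hx.2]

lemma wfY_left_approx (hsm : StrictMonoOn h (Set.Ici 0)) (hc : ContinuousOn h (Set.Ici 0))
    {lam ε : ℝ} (hε : 0 < ε) :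
    ∃ lam' < lam, wfY n h lam - ε ≤ wfY n h lam' := by
  by_cases hy : wfY n h lam ≤ ε
  · exact ⟨lam - 1, by linarith, by linarith [wfY_nonneg (h := h) (n := n) (lam - 1)]⟩
  · push_neg at hy
    set y := wfY n h lam with hydef
    have hmem := wfY_mem_of_pos hc (lt_trans hε hy)
    have hx0 : (0:ℝ) ≤ y - ε := by linarith
    have hxy : y - ε < y := by linarith
    have hlt : h (y - ε) < h y := hsm (Set.mem_Ici.mpr hx0) hmem.1.1 hxy
    refine ⟨h (y - ε), lt_of_lt_of_le hlt hmem.2, ?_⟩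
    have : y - ε ≤ wfY n h (h (y - ε)) :=
      wfY_le_of_mem ⟨hx0, by linarith [hmem.1.2]⟩ le_rfl
    linarith

end WFY
section LAMSTAR

variable {E : Type} [DecidableEq E]

/-- Total water-filled mass at level `lam`. -/
noncomputable def Gf (F : Finset E) (n : ℝ) (h : E → ℝ → ℝ) (lam : ℝ) : ℝ :=
  ∑ e ∈ F, wfY n (h e) lam

/-- The water-filling level for total mass `m`. -/
noncomputable def lamStar (F : Finset E) (n : ℝ) (h : E → ℝ → ℝ) (m : ℝ) : ℝ :=
  sInf {lam | (∃ e ∈ F, h e 0 ≤ lam) ∧ m ≤ Gf F n h lam}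

variable {F : Finset E} {n : ℝ} {h : E → ℝ → ℝ} {m : ℝ}

lemma Gf_nonneg (F : Finset E) (n : ℝ) (h : E → ℝ → ℝ) (lam : ℝ) : 0 ≤ Gf F n h lam :=
  Finset.sum_nonneg fun e _ => wfY_nonneg _

lemma Gf_mono {lam lam' : ℝ} (hl : lam ≤ lam') : Gf F n h lam ≤ Gf F n h lam' :=
  Finset.sum_le_sum fun e _ => wfY_mono hl

lemma lamStar_S_bddBelow (hF : F.Nonempty) :
    BddBelow {lam | (∃ e ∈ F, h e 0 ≤ lam) ∧ m ≤ Gf F n h lam} := by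
  refine ⟨F.inf' hF (fun e => h e 0), fun lam hlam => ?_⟩
  obtain ⟨e, he, hle⟩ := hlam.1
  exact le_trans (Finset.inf'_le _ he) hle

lemma lamStar_S_mem_hn (hsm : ∀ e ∈ F, StrictMonoOn (h e) (Set.Ici 0))
    (hn : 0 < n) (hmn : m ≤ n) {e : E} (he : e ∈ F) :
    h e n ∈ {lam | (∃ e ∈ F, h e 0 ≤ lam) ∧ m ≤ Gf F n h lam} := by
  have hmono := (hsm e he).monotoneOn
  have h0n : h e 0 ≤ h e n := hmono (Set.mem_Ici.mpr le_rfl) (Set.mem_Ici.mpr hn.le) hn.le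
  refine ⟨⟨e, he, h0n⟩, ?_⟩
  have hwf : wfY n (h e) (h e n) = n := wfY_eq_n hn.le le_rfl
  have hle : wfY n (h e) (h e n) ≤ Gf F n h (h e n) :=
    Finset.single_le_sum (f := fun d => wfY n (h d) (h e n)) (fun d _ => wfY_nonneg _) he
  rw [hwf] at hle
  linarith

lemma lamStar_S_nonempty (hF : F.Nonempty) (hsm : ∀ e ∈ F, StrictMonoOn (h e) (Set.Ici 0))
    (hn : 0 < n) (hmn : m ≤ n) :
    {lam | (∃ e ∈ F, h e 0 ≤ lam) ∧ m ≤ Gf F n h lam}.Nonempty := by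
  obtain ⟨e, he⟩ := hF
  exact ⟨h e n, lamStar_S_mem_hn hsm hn hmn he⟩

lemma lamStar_le_hn (hF : F.Nonempty) (hsm : ∀ e ∈ F, StrictMonoOn (h e) (Set.Ici 0))
    (hn : 0 < n) (hmn : m ≤ n) {e : E} (he : e ∈ F) :
    lamStar F n h m ≤ h e n :=
  csInf_le (lamStar_S_bddBelow hF) (lamStar_S_mem_hn hsm hn hmn he)

lemma lamStar_mono (hF : F.Nonempty) (hsm : ∀ e ∈ F, StrictMonoOn (h e) (Set.Ici 0))
    (hn : 0 < n) {m m' : ℝ} (hmm : m ≤ m') (hm'n : m' ≤ n) :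
    lamStar F n h m ≤ lamStar F n h m' := by
  apply csInf_le_csInf (lamStar_S_bddBelow hF) (lamStar_S_nonempty hF hsm hn hm'n)
  intro lam hlam
  exact ⟨hlam.1, le_trans hmm hlam.2⟩

lemma Gf_lamStar_ge (hF : F.Nonempty) (hsm : ∀ e ∈ F, StrictMonoOn (h e) (Set.Ici 0))
    (hc : ∀ e ∈ F, ContinuousOn (h e) (Set.Ici 0))
    (hn : 0 < n) (hm0 : 0 ≤ m) (hmn : m ≤ n) :
    m ≤ Gf F n h (lamStar F n h m) := by
  by_contra hcon
  push_neg at hcon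
  set L := lamStar F n h m with hL
  set G := Gf F n h L with hG
  set k := F.card with hk
  have hk1 : (1:ℝ) ≤ (k:ℝ) := by
    have := Finset.card_pos.mpr hF
    exact_mod_cast this
  set η := (m - G) / (k + 1) with hη
  have hηpos : 0 < η := by
    apply div_pos (by linarith) (by linarith)
  set b : E → ℝ := fun e =>
    if wfY n (h e) L + η ≤ n then h e (wfY n (h e) L + η) else L + 1 with hb
  have hbgt : ∀ e ∈ F, L < b e := by
    intro e he
    simp only [hb]
    split_ifs with hif
    · have hwlt : wfY n (h e) L < n := by linarith
      have h1 : L ≤ h e (wfY n (h e) L) := wfY_ge_spec (hc e he) hn.le hwlt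
      have h2 : h e (wfY n (h e) L) < h e (wfY n (h e) L + η) :=
        hsm e he (Set.mem_Ici.mpr (wfY_nonneg _))
          (Set.mem_Ici.mpr (by linarith [wfY_nonneg (h := h e) (n := n) L])) (by linarith)
      linarith
    · linarith
  have hlt : L < F.inf' hF b := (Finset.lt_inf'_iff hF).mpr hbgt
  obtain ⟨lam', hlam', hlam'lt⟩ :=
    exists_lt_of_csInf_lt (lamStar_S_nonempty hF hsm hn hmn) hlt
  have hbound : ∀ e ∈ F, wfY n (h e) lam' ≤ wfY n (h e) L + η := by
    intro e he
    have hle : lam' < b e := lt_of_lt_of_le hlam'lt (Finset.inf'_le _ he)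
    simp only [hb] at hle
    split_ifs at hle with hif
    · exact wfY_lt_bound (hsm e he) hηpos hle
    · push_neg at hif
      linarith [wfY_le_n (h := h e) (hn.le) lam']
  have hsum : Gf F n h lam' ≤ G + k * η := by
    have : Gf F n h lam' ≤ ∑ e ∈ F, (wfY n (h e) L + η) :=
      Finset.sum_le_sum hbound
    rw [Finset.sum_add_distrib, Finset.sum_const, nsmul_eq_mul] at this
    simpa [hG, Gf, hk] using this
  have hm' : m ≤ Gf F n h lam' := hlam'.2
  have hthis : m - G ≤ (k:ℝ) * ((m - G)/((k:ℝ)+1)) := by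
    rw [← hη]; linarith
  have hkpos : (0:ℝ) < (k:ℝ) + 1 := by linarith
  rw [← mul_div_assoc, le_div_iff₀ hkpos] at hthis
  nlinarith

lemma Gf_lamStar_le (hF : F.Nonempty) (hsm : ∀ e ∈ F, StrictMonoOn (h e) (Set.Ici 0))
    (hc : ∀ e ∈ F, ContinuousOn (h e) (Set.Ici 0))
    (hn : 0 < n) (hm0 : 0 ≤ m) (hmn : m ≤ n) :
    Gf F n h (lamStar F n h m) ≤ m := by
  by_contra hcon
  push_neg at hcon
  set L := lamStar F n h m with hL
  set G := Gf F n h L with hG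
  set k := F.card with hk
  have hk1 : (1:ℝ) ≤ (k:ℝ) := by
    have := Finset.card_pos.mpr hF
    exact_mod_cast this
  set ε := (G - m) / (k + 1) with hε
  have hεpos : 0 < ε := by apply div_pos (by linarith) (by linarith)
  have H : ∀ e ∈ F, ∃ lam', lam' < L ∧ wfY n (h e) L - ε ≤ wfY n (h e) lam' := by
    intro e he
    obtain ⟨lam', h1, h2⟩ := wfY_left_approx (hsm e he) (hc e he) hεpos (lam := L) (n := n)
    exact ⟨lam', h1, h2⟩
  choose g hg1 hg2 using H
  classical
  set g' : E → ℝ := fun e => if he : e ∈ F then g e he else 0 with hg'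
  set lamb := F.sup' hF g' with hlamb
  have hlambL : lamb < L := by
    rw [hlamb, Finset.sup'_lt_iff hF]
    intro e he
    simp only [hg', dif_pos he]
    exact hg1 e he
  have hwf : ∀ e ∈ F, wfY n (h e) L - ε ≤ wfY n (h e) lamb := by
    intro e he
    refine le_trans (hg2 e he) (wfY_mono ?_)
    calc g e he = g' e := by simp [hg', dif_pos he]
    _ ≤ lamb := Finset.le_sup' _ he
  have hGlamb : G - k * ε ≤ Gf F n h lamb := by
    have : ∑ e ∈ F, (wfY n (h e) L - ε) ≤ Gf F n h lamb := Finset.sum_le_sum hwf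
    rw [Finset.sum_sub_distrib, Finset.sum_const, nsmul_eq_mul] at this
    simpa [hG, Gf, hk] using this
  have hGm : m < Gf F n h lamb := by
    have hkpos : (0:ℝ) < (k:ℝ) + 1 := by linarith
    have h2 : (k:ℝ) * ε < G - m := by
      rw [hε, ← mul_div_assoc, div_lt_iff₀ hkpos]
      nlinarith
    linarith
  -- lamb ∈ S
  have hpos : ∃ e ∈ F, 0 < wfY n (h e) lamb := by
    by_contra hall
    push_neg at hall
    have : Gf F n h lamb = 0 := by
      apply le_antisymm _ (Gf_nonneg _ _ _ _)
      apply Finset.sum_nonpos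
      intro e he
      exact hall e he
    linarith
  obtain ⟨e0, he0, hwf0⟩ := hpos
  have hmem := wfY_mem_of_pos (hc e0 he0) hwf0
  have hS : lamb ∈ {lam | (∃ e ∈ F, h e 0 ≤ lam) ∧ m ≤ Gf F n h lam} := by
    refine ⟨⟨e0, he0, ?_⟩, le_of_lt hGm⟩
    have : h e0 0 ≤ h e0 (wfY n (h e0) lamb) :=
      (hsm e0 he0).monotoneOn (Set.mem_Ici.mpr le_rfl)
        (Set.mem_Ici.mpr (wfY_nonneg _)) (wfY_nonneg _)
    linarith [hmem.2]
  have h3 : lamStar F n h m ≤ lamb := csInf_le (lamStar_S_bddBelow hF) hS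
  rw [← hL] at h3
  linarith

lemma lamStar_sum (hF : F.Nonempty) (hsm : ∀ e ∈ F, StrictMonoOn (h e) (Set.Ici 0))
    (hc : ∀ e ∈ F, ContinuousOn (h e) (Set.Ici 0))
    (hn : 0 < n) (hm0 : 0 ≤ m) (hmn : m ≤ n) :
    ∑ e ∈ F, wfY n (h e) (lamStar F n h m) = m :=
  le_antisymm (Gf_lamStar_le hF hsm hc hn hm0 hmn) (Gf_lamStar_ge hF hsm hc hn hm0 hmn)

/-- Water-filling property (W2): every resource has cost at least the level. -/
lemma lamStar_W2 (hF : F.Nonempty) (hsm : ∀ e ∈ F, StrictMonoOn (h e) (Set.Ici 0))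
    (hc : ∀ e ∈ F, ContinuousOn (h e) (Set.Ici 0))
    (hn : 0 < n) (hmn : m ≤ n) {e : E} (he : e ∈ F) :
    lamStar F n h m ≤ h e (wfY n (h e) (lamStar F n h m)) := by
  rcases lt_or_eq_of_le (wfY_le_n (h := h e) hn.le (lamStar F n h m)) with hlt | heq
  · exact wfY_ge_spec (hc e he) hn.le hlt
  · rw [heq]
    exact lamStar_le_hn hF hsm hn hmn he

/-- Water-filling property (W1): every occupied resource has cost at most the level. -/
lemma lamStar_W1 (hc : ∀ e ∈ F, ContinuousOn (h e) (Set.Ici 0))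
    {e : E} (he : e ∈ F) (hpos : 0 < wfY n (h e) (lamStar F n h m)) :
    h e (wfY n (h e) (lamStar F n h m)) ≤ lamStar F n h m :=
  (wfY_mem_of_pos (hc e he) hpos).2

lemma wf_coord_lip (hF : F.Nonempty) (hsm : ∀ e ∈ F, StrictMonoOn (h e) (Set.Ici 0))
    (hc : ∀ e ∈ F, ContinuousOn (h e) (Set.Ici 0))
    (hn : 0 < n) {m m' : ℝ} (hm0 : 0 ≤ m) (hmm : m ≤ m') (hm'n : m' ≤ n)
    {e : E} (he : e ∈ F) :
    wfY n (h e) (lamStar F n h m') - wfY n (h e) (lamStar F n h m) ≤ m' - m := by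
  have hmono : ∀ d ∈ F, 0 ≤ wfY n (h d) (lamStar F n h m') - wfY n (h d) (lamStar F n h m) := by
    intro d hd
    have := wfY_mono (h := h d) (n := n) (lamStar_mono hF hsm hn hmm hm'n)
    linarith
  have hsum : ∑ d ∈ F, (wfY n (h d) (lamStar F n h m') - wfY n (h d) (lamStar F n h m))
      = m' - m := by
    rw [Finset.sum_sub_distrib, lamStar_sum hF hsm hc hn (le_trans hm0 hmm) hm'n,
      lamStar_sum hF hsm hc hn hm0 (le_trans hmm hm'n)]
  calc wfY n (h e) (lamStar F n h m') - wfY n (h e) (lamStar F n h m)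
      ≤ ∑ d ∈ F, (wfY n (h d) (lamStar F n h m') - wfY n (h d) (lamStar F n h m)) :=
        Finset.single_le_sum hmono he
    _ = m' - m := hsum

end LAMSTAR
section HELPERS

variable {E : Type} [Fintype E] [DecidableEq E]

lemma bddBelow_range_fin {ι : Type} [Finite ι] (g : ι → ℝ) : BddBelow (Set.range g) :=
  (Set.finite_range g).bddBelow

/-- `⨅` over a nonempty fintype equals `Finset.inf'` over `univ`. -/
lemma iInf_eq_inf' {ι : Type} [Fintype ι] [Nonempty ι] (g : ι → ℝ) :
    (⨅ i, g i) = Finset.univ.inf' Finset.univ_nonempty g := by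
  apply le_antisymm
  · exact Finset.le_inf' _ _ fun b _ => ciInf_le (bddBelow_range_fin g) b
  · exact le_ciInf fun i => Finset.inf'_le _ (Finset.mem_univ i)

lemma continuousOn_finset_inf' {ι : Type} {F : Finset ι} (hF : F.Nonempty)
    {g : ι → ℝ → ℝ} {S : Set ℝ} (hg : ∀ e ∈ F, ContinuousOn (g e) S) :
    ContinuousOn (fun t => F.inf' hF (fun e => g e t)) S := by
  induction hF using Finset.Nonempty.cons_induction with
  | singleton a => simpa using hg a (Finset.mem_singleton_self a)
  | cons a s ha hs ih =>
    have h1 : ContinuousOn (g a) S := hg a (Finset.mem_cons_self a _)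
    have h2 : ContinuousOn (fun t => s.inf' hs (fun e => g e t)) S :=
      ih (fun e he => hg e (Finset.mem_cons.mpr (Or.inr he)))
    have : (fun t => (Finset.cons a s ha).inf' (Finset.cons_nonempty ha) (fun e => g e t))
        = fun t => (g a t) ⊓ (s.inf' hs (fun e => g e t)) := by
      funext t
      rw [Finset.inf'_cons]
    rw [this]
    exact h1.inf h2

lemma tendsto_finset_inf' {ι : Type} {F : Finset ι} (hF : F.Nonempty)
    {g : ℕ → ι → ℝ} {gl : ι → ℝ} {L : Filter ℕ}
    (hg : ∀ e ∈ F, Filter.Tendsto (fun k => g k e) L (nhds (gl e))) :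
    Filter.Tendsto (fun k => F.inf' hF (fun e => g k e)) L (nhds (F.inf' hF gl)) := by
  induction hF using Finset.Nonempty.cons_induction with
  | singleton a => simpa using hg a (Finset.mem_singleton_self a)
  | cons a s ha hs ih =>
    have h1 := hg a (Finset.mem_cons_self a _)
    have h2 := ih (fun e he => hg e (Finset.mem_cons.mpr (Or.inr he)))
    have heq : (fun k => (Finset.cons a s ha).inf' (Finset.cons_nonempty ha) (fun e => g k e))
        = fun k => (g k a) ⊓ (s.inf' hs (fun e => g k e)) := by
      funext k; rw [Finset.inf'_cons]
    rw [heq, Finset.inf'_cons hs]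
    exact h1.min h2

/-- Wardrop states for strictly increasing costs are unique. -/
lemma ward_unique {F : Finset E} {h : E → ℝ → ℝ}
    (hsm : ∀ e ∈ F, StrictMonoOn (h e) (Set.Ici 0)) {s1 s2 : E → ℝ}
    (hs1 : ∀ e ∈ F, 0 ≤ s1 e) (hs2 : ∀ e ∈ F, 0 ≤ s2 e)
    (hsum : ∑ e ∈ F, s1 e = ∑ e ∈ F, s2 e)
    (hw1 : ∀ e ∈ F, 0 < s1 e → ∀ d ∈ F, h e (s1 e) ≤ h d (s1 d))
    (hw2 : ∀ e ∈ F, 0 < s2 e → ∀ d ∈ F, h e (s2 e) ≤ h d (s2 d)) :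
    ∀ e ∈ F, s1 e = s2 e := by
  have key : ∀ a ∈ F, ∀ b ∈ F, s1 a < s2 a → s2 b < s1 b → False := by
    intro a ha b hb hab hba
    have hbocc : 0 < s1 b := lt_of_le_of_lt (hs2 b hb) hba
    have haocc : 0 < s2 a := lt_of_le_of_lt (hs1 a ha) hab
    have h1 : h b (s1 b) ≤ h a (s1 a) := hw1 b hb hbocc a ha
    have h2 : h a (s1 a) < h a (s2 a) :=
      hsm a ha (Set.mem_Ici.mpr (hs1 a ha)) (Set.mem_Ici.mpr (le_of_lt haocc)) hab
    have h3 : h a (s2 a) ≤ h b (s2 b) := hw2 a ha haocc b hb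
    have h4 : h b (s2 b) < h b (s1 b) :=
      hsm b hb (Set.mem_Ici.mpr (hs2 b hb)) (Set.mem_Ici.mpr (le_of_lt hbocc)) hba
    linarith
  intro e he
  by_contra hne
  rcases lt_or_gt_of_ne hne with hlt | hgt
  · have : ∃ b ∈ F, s2 b < s1 b := by
      by_contra hall
      push_neg at hall
      have : ∑ x ∈ F, s1 x < ∑ x ∈ F, s2 x :=
        Finset.sum_lt_sum hall ⟨e, he, hlt⟩
      linarith
    obtain ⟨b, hb, hba⟩ := this
    exact key e he b hb hlt hba
  · have : ∃ a ∈ F, s1 a < s2 a := by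
      by_contra hall
      push_neg at hall
      have : ∑ x ∈ F, s2 x < ∑ x ∈ F, s1 x :=
        Finset.sum_lt_sum hall ⟨e, he, hgt⟩
      linarith
    obtain ⟨a, ha, hab⟩ := this
    exact key a ha e he hab hgt

/-- Verification lemma: sufficient conditions for a WCR equilibrium with a
distinguished "safest" resource `f`. -/
lemma verify_eq (hE : 2 ≤ Fintype.card E) (r : ℝ) (c : E → ℝ → ℝ) (s : E → ℝ) (f : E)
    (hC1 : ∀ e, e ≠ f → 0 < s e → ∀ d, d ≠ f → c e (r * s e) ≤ c d (r * s d))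
    (hC2 : ∀ e, e ≠ f → c f (s f / r) ≤ c e (s e / r))
    (hC3 : ∀ e, e ≠ f → 0 < s e →
      c e (r * s e) + (⨅ d : { d : E // d ≠ f }, c d.1 (s d.1 / r))
        ≤ c f (r * s f) + c f (s f / r))
    (hC4 : 0 < s f → ∀ d, d ≠ f →
      c f (r * s f) + c f (s f / r)
        ≤ c d (r * s d) + (⨅ d : { d : E // d ≠ f }, c d.1 (s d.1 / r))) :
    ∀ e, 0 < s e → ∀ d, WCR c r s e ≤ WCR c r s d := by
  haveI : Nontrivial E := Fintype.one_lt_card_iff_nontrivial.mp (by omega)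
  haveI hne : ∀ e : E, Nonempty { d : E // d ≠ e } := by
    intro e
    obtain ⟨d, hd⟩ := exists_ne e
    exact ⟨⟨d, hd⟩⟩
  have hmu : ∀ e, e ≠ f →
      (⨅ d : { d : E // d ≠ e }, c d.1 (s d.1 / r)) = c f (s f / r) := by
    intro e he
    apply le_antisymm
    · exact ciInf_le (bddBelow_range_fin (fun d : { d : E // d ≠ e } => c d.1 (s d.1 / r))) ⟨f, Ne.symm he⟩
    · apply le_ciInf
      rintro ⟨d, hd⟩
      by_cases hdf : d = f
      · subst hdf; exact le_rfl
      · exact hC2 d hdf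
  intro e hepos d
  unfold WCR
  by_cases hef : e = f
  · subst hef
    by_cases hdf : d = e
    · subst hdf; exact le_rfl
    · rw [hmu d hdf]
      have := hC4 hepos d hdf
      linarith
  · rw [hmu e hef]
    by_cases hdf : d = f
    · subst hdf
      have := hC3 e hef hepos
      linarith
    · rw [hmu d hdf]
      have := hC1 e hef hepos d hdf
      linarith

/-- Verification lemma for the case of a tie among safest resources. -/
lemma verify_eq_tie (hE : 2 ≤ Fintype.card E) (r : ℝ) (c : E → ℝ → ℝ) (s : E → ℝ)
    (g1 g2 : E) (hg : g1 ≠ g2)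
    (hmin1 : ∀ d, c g1 (s g1 / r) ≤ c d (s d / r))
    (hmin2 : ∀ d, c g2 (s g2 / r) ≤ c d (s d / r))
    (hW : ∀ e, 0 < s e → ∀ d, c e (r * s e) ≤ c d (r * s d)) :
    ∀ e, 0 < s e → ∀ d, WCR c r s e ≤ WCR c r s d := by
  haveI : Nontrivial E := Fintype.one_lt_card_iff_nontrivial.mp (by omega)
  haveI hne : ∀ e : E, Nonempty { d : E // d ≠ e } := by
    intro e
    obtain ⟨d, hd⟩ := exists_ne e
    exact ⟨⟨d, hd⟩⟩
  have heq12 : c g1 (s g1 / r) = c g2 (s g2 / r) :=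
    le_antisymm (hmin1 g2) (hmin2 g1)
  have hmu : ∀ e, (⨅ d : { d : E // d ≠ e }, c d.1 (s d.1 / r)) = c g1 (s g1 / r) := by
    intro e
    apply le_antisymm
    · by_cases heg : g1 = e
      · have hg2e : g2 ≠ e := by rw [← heg]; exact Ne.symm hg
        have h1 : (⨅ d : { d : E // d ≠ e }, c d.1 (s d.1 / r)) ≤ c g2 (s g2 / r) :=
          ciInf_le (bddBelow_range_fin (fun d : { d : E // d ≠ e } => c d.1 (s d.1 / r))) ⟨g2, hg2e⟩
        rw [heq12]
        exact h1
      · exact ciInf_le (bddBelow_range_fin (fun d : { d : E // d ≠ e } => c d.1 (s d.1 / r))) ⟨g1, heg⟩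
    · apply le_ciInf
      rintro ⟨d, _⟩
      exact hmin1 d
  intro e hepos d
  unfold WCR
  rw [hmu e, hmu d]
  have := hW e hepos d
  linarith

end HELPERS
section MAIN

variable {E : Type} [Fintype E] [DecidableEq E]

lemma iInf_ne_eq_inf'_erase (f : E) (g : E → ℝ)
    (hFne : (Finset.univ.erase f).Nonempty) :
    (⨅ d : { d : E // d ≠ f }, g d.1) = (Finset.univ.erase f).inf' hFne g := by
  haveI : Nonempty { d : E // d ≠ f } := by
    obtain ⟨d, hd⟩ := hFne
    exact ⟨⟨d, (Finset.mem_erase.mp hd).1⟩⟩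
  apply le_antisymm
  · apply Finset.le_inf'
    intro d hd
    exact ciInf_le (bddBelow_range_fin (fun d : { d : E // d ≠ f } => g d.1)) ⟨d, (Finset.mem_erase.mp hd).1⟩
  · apply le_ciInf
    rintro ⟨d, hd⟩
    exact Finset.inf'_le _ (Finset.mem_erase.mpr ⟨hd, Finset.mem_univ d⟩)

theorem aux_strict (hE : 2 ≤ Fintype.card E)
    (n : ℝ) (hn : 0 < n) (r : ℝ) (hr : 1 ≤ r)
    (c : E → ℝ → ℝ)
    (hc_cont : ∀ e, ContinuousOn (c e) (Set.Ici 0))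
    (hc_sm : ∀ e, StrictMonoOn (c e) (Set.Ici 0)) :
    ∃ s : E → ℝ, (∀ e, 0 ≤ s e) ∧ ∑ e, s e = n ∧
      ∀ e, 0 < s e → ∀ d, WCR c r s e ≤ WCR c r s d := by
  classical
  haveI : Nontrivial E := Fintype.one_lt_card_iff_nontrivial.mp (by omega)
  have hr0 : (0:ℝ) < r := lt_of_lt_of_le one_pos hr
  set A : E → ℝ → ℝ := fun e x => c e (r * x) with hA
  set B : E → ℝ → ℝ := fun e x => c e (x / r) with hB
  have hA_sm : ∀ e, StrictMonoOn (A e) (Set.Ici 0) := by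
    intro e x hx y hy hxy
    exact hc_sm e (Set.mem_Ici.mpr (mul_nonneg hr0.le hx))
      (Set.mem_Ici.mpr (mul_nonneg hr0.le hy)) (by simp only [Set.mem_Ici] at *; nlinarith)
  have hA_cont : ∀ e, ContinuousOn (A e) (Set.Ici 0) := by
    intro e
    apply (hc_cont e).comp (continuous_const.mul continuous_id).continuousOn
    intro x hx
    exact Set.mem_Ici.mpr (mul_nonneg hr0.le hx)
  have hB_cont : ∀ e, ContinuousOn (B e) (Set.Ici 0) := by
    intro e
    apply (hc_cont e).comp (continuous_id.div_const r).continuousOn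
    intro x hx
    exact Set.mem_Ici.mpr (div_nonneg hx hr0.le)
  have hB_mono : ∀ e, MonotoneOn (B e) (Set.Ici 0) := by
    intro e x hx y hy hxy
    exact (hc_sm e).monotoneOn (Set.mem_Ici.mpr (div_nonneg hx hr0.le))
      (Set.mem_Ici.mpr (div_nonneg (le_trans hx hxy) hr0.le))
      ((div_le_div_iff_of_pos_right hr0).mpr hxy)
  have hBA : ∀ e x, 0 ≤ x → B e x ≤ A e x := by
    intro e x hx
    apply (hc_sm e).monotoneOn (Set.mem_Ici.mpr (div_nonneg hx hr0.le))
      (Set.mem_Ici.mpr (mul_nonneg hr0.le hx))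
    calc x / r ≤ x := div_le_self hx hr
    _ ≤ r * x := le_mul_of_one_le_left hx hr
  -- Phase 0 : global water-filling for A
  have hFu : (Finset.univ : Finset E).Nonempty := Finset.univ_nonempty
  have hsmU : ∀ e ∈ (Finset.univ : Finset E), StrictMonoOn (A e) (Set.Ici 0) :=
    fun e _ => hA_sm e
  have hcoU : ∀ e ∈ (Finset.univ : Finset E), ContinuousOn (A e) (Set.Ici 0) :=
    fun e _ => hA_cont e
  set lam0 := lamStar Finset.univ n A n with hlam0
  set s0 : E → ℝ := fun e => wfY n (A e) lam0 with hs0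
  have hs0nn : ∀ e, 0 ≤ s0 e := fun e => wfY_nonneg _
  have hs0sum : ∑ e, s0 e = n := lamStar_sum hFu hsmU hcoU hn hn.le le_rfl
  have hW1₀ : ∀ e, 0 < s0 e → A e (s0 e) ≤ lam0 :=
    fun e he => lamStar_W1 hcoU (Finset.mem_univ e) he
  have hW2₀ : ∀ e, lam0 ≤ A e (s0 e) :=
    fun e => lamStar_W2 hFu hsmU hcoU hn le_rfl (Finset.mem_univ e)
  have hWard₀ : ∀ e, 0 < s0 e → ∀ d, A e (s0 e) ≤ A d (s0 d) :=
    fun e he d => le_trans (hW1₀ e he) (hW2₀ d)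
  -- the safest resource
  obtain ⟨f, _, hfmin'⟩ := Finset.exists_min_image Finset.univ
    (fun e => B e (s0 e)) hFu
  have hfmin : ∀ d, B f (s0 f) ≤ B d (s0 d) := fun d => hfmin' d (Finset.mem_univ d)
  by_cases htie : ∃ g, g ≠ f ∧ B g (s0 g) ≤ B f (s0 f)
  · -- tie case : s0 is already an equilibrium
    obtain ⟨g, hgf, hgle⟩ := htie
    refine ⟨s0, hs0nn, hs0sum, ?_⟩
    apply verify_eq_tie hE r c s0 f g (Ne.symm hgf)
    · intro d; exact hfmin d
    · intro d; exact le_trans hgle (hfmin d)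
    · intro e he d; exact hWard₀ e he d
  · push_neg at htie
    have hstrict : ∀ g, g ≠ f → B f (s0 f) < B g (s0 g) := fun g hg => htie g hg
    -- f is occupied
    have hf_occ : 0 < s0 f := by
      rcases lt_or_eq_of_le (hs0nn f) with h | h
      · exact h
      · exfalso
        have hocc : ∃ e0, 0 < s0 e0 := by
          by_contra hall
          push_neg at hall
          have : ∑ e, s0 e ≤ 0 := Finset.sum_nonpos (fun e _ => hall e)
          linarith
        obtain ⟨e0, he0⟩ := hocc
        have he0f : e0 ≠ f := by
          intro hh; rw [hh, ← h] at he0; exact lt_irrefl _ he0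
        have h1 : lam0 ≤ A f (s0 f) := hW2₀ f
        have h2 : A f (s0 f) = B f (s0 f) := by
          rw [← h]; simp [hA, hB]
        have h3 : B f (s0 f) < B e0 (s0 e0) := hstrict e0 he0f
        have h4 : B e0 (s0 e0) ≤ A e0 (s0 e0) := hBA e0 (s0 e0) (hs0nn e0)
        have h5 : A e0 (s0 e0) ≤ lam0 := hW1₀ e0 he0
        linarith
    have hs0fn : s0 f ≤ n := wfY_le_n hn.le _
    by_cases ht0n : s0 f = n
    · -- single support case
      have hrest : ∀ e, e ≠ f → s0 e = 0 := by
        intro e hef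
        have hsplit : s0 f + ∑ e ∈ Finset.univ.erase f, s0 e = n := by
          rw [Finset.add_sum_erase _ _ (Finset.mem_univ f)]
          exact hs0sum
        have hz : ∑ e ∈ Finset.univ.erase f, s0 e = 0 := by
          rw [ht0n] at hsplit; linarith
        exact (Finset.sum_eq_zero_iff_of_nonneg
          (fun d _ => hs0nn d)).mp hz e (Finset.mem_erase.mpr ⟨hef, Finset.mem_univ e⟩)
      refine ⟨s0, hs0nn, hs0sum, ?_⟩
      apply verify_eq hE r c s0 f
      · intro e hef hepos d hdf
        exact absurd (hrest e hef) (ne_of_gt hepos)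
      · intro e hef
        exact le_of_lt (hstrict e hef)
      · intro e hef hepos
        exact absurd (hrest e hef) (ne_of_gt hepos)
      · intro hfpos d hdf
        haveI : Nonempty { d : E // d ≠ f } := ⟨⟨d, hdf⟩⟩
        have hAf : A f (s0 f) ≤ lam0 := hW1₀ f hf_occ
        have hAd : lam0 ≤ A d (s0 d) := hW2₀ d
        have hBmu : c f (s0 f / r) ≤ ⨅ d : { d : E // d ≠ f }, c d.1 (s0 d.1 / r) := by
          apply le_ciInf
          rintro ⟨d', hd'⟩
          exact le_of_lt (hstrict d' hd')
        have h1 : c f (r * s0 f) ≤ lam0 := hAf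
        have h2 : lam0 ≤ c d (r * s0 d) := hAd
        linarith
    · -- PHASE 2
      have ht0lt : s0 f < n := lt_of_le_of_ne hs0fn ht0n
      set t0 := s0 f with ht0
      obtain ⟨g0, hg0f⟩ := exists_ne f
      have hFne : (Finset.univ.erase f).Nonempty :=
        ⟨g0, Finset.mem_erase.mpr ⟨hg0f, Finset.mem_univ g0⟩⟩
      set F := Finset.univ.erase f with hF
      have hsmF : ∀ e ∈ F, StrictMonoOn (A e) (Set.Ici 0) := fun e _ => hA_sm e
      have hcoF : ∀ e ∈ F, ContinuousOn (A e) (Set.Ici 0) := fun e _ => hA_cont e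
      set w : ℝ → E → ℝ := fun t e => wfY n (A e) (lamStar F n A (n - t)) with hwdef
      have hwnn : ∀ t e, 0 ≤ w t e := fun t e => wfY_nonneg _
      have hmrange : ∀ t, t ∈ Set.Icc t0 n → 0 ≤ n - t ∧ n - t ≤ n := by
        intro t ht
        refine ⟨by linarith [ht.2], ?_⟩
        have h1 : 0 ≤ t := le_trans hf_occ.le ht.1
        linarith
      have hwsum : ∀ t, t ∈ Set.Icc t0 n → ∑ e ∈ F, w t e = n - t := by
        intro t ht
        exact lamStar_sum hFne hsmF hcoF hn (hmrange t ht).1 (hmrange t ht).2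
      have hwW1 : ∀ t ∈ Set.Icc t0 n, ∀ e ∈ F, 0 < w t e →
          A e (w t e) ≤ lamStar F n A (n - t) := by
        intro t _ e he hpos
        exact lamStar_W1 hcoF he hpos
      have hwW2 : ∀ t ∈ Set.Icc t0 n, ∀ e ∈ F,
          lamStar F n A (n - t) ≤ A e (w t e) := by
        intro t ht e he
        exact lamStar_W2 hFne hsmF hcoF hn (hmrange t ht).2 he
      have hwWard : ∀ t ∈ Set.Icc t0 n, ∀ e ∈ F, 0 < w t e → ∀ d ∈ F,
          A e (w t e) ≤ A d (w t d) := by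
        intro t ht e he hpos d hd
        exact le_trans (hwW1 t ht e he hpos) (hwW2 t ht d hd)
      have hwmono : ∀ t t', t0 ≤ t → t ≤ t' → t' ≤ n → ∀ e, w t' e ≤ w t e := by
        intro t t' h1 h2 h3 e
        apply wfY_mono
        apply lamStar_mono hFne hsmF hn (by linarith) (by linarith [hf_occ])
      have hwlip : ∀ e ∈ F, ∀ t ∈ Set.Icc t0 n, ∀ t' ∈ Set.Icc t0 n, t ≤ t' →
          w t e - w t' e ≤ t' - t := by
        intro e he t ht t' ht' htt
        have h0 : (0:ℝ) ≤ n - t' := by linarith [ht'.2]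
        have hlip := wf_coord_lip hFne hsmF hcoF hn h0
          (by linarith : n - t' ≤ n - t) (by linarith [hf_occ, ht.1] : n - t ≤ n) he
        simp only [hwdef]
        linarith [hlip]
      have hwcont : ∀ e ∈ F, ContinuousOn (fun t => w t e) (Set.Icc t0 n) := by
        intro e he
        apply LipschitzOnWith.continuousOn (K := 1)
        apply LipschitzOnWith.of_dist_le_mul
        intro t ht t' ht'
        rw [Real.dist_eq, Real.dist_eq, NNReal.coe_one, one_mul]
        rcases le_total t' t with h | h
        · have h1 := hwlip e he t' ht' t ht h
          have h2 : w t e ≤ w t' e := hwmono t' t ht'.1 h ht.2 e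
          rw [abs_of_nonpos (by linarith), abs_of_nonneg (by linarith)]
          linarith
        · have h1 := hwlip e he t ht t' ht' h
          have h2 : w t' e ≤ w t e := hwmono t t' ht.1 h ht'.2 e
          rw [abs_of_nonneg (by linarith), abs_of_nonpos (by linarith)]
          linarith
      have hsubset : Set.Icc t0 n ⊆ Set.Ici (0:ℝ) :=
        fun x hx => Set.mem_Ici.mpr (le_trans hf_occ.le hx.1)
      set Am : ℝ → ℝ := fun t => F.inf' hFne (fun e => A e (w t e)) with hAm
      set M2 : ℝ → ℝ := fun t => F.inf' hFne (fun e => B e (w t e)) with hM2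
      set Df : ℝ → ℝ := fun t => A f t + B f t - Am t - M2 t with hDf
      have hAw_cont : ∀ e ∈ F, ContinuousOn (fun t => A e (w t e)) (Set.Icc t0 n) := by
        intro e he
        exact (hA_cont e).comp (hwcont e he) (fun t _ => Set.mem_Ici.mpr (hwnn t e))
      have hBw_cont : ∀ e ∈ F, ContinuousOn (fun t => B e (w t e)) (Set.Icc t0 n) := by
        intro e he
        exact (hB_cont e).comp (hwcont e he) (fun t _ => Set.mem_Ici.mpr (hwnn t e))
      have hAmcont : ContinuousOn Am (Set.Icc t0 n) := continuousOn_finset_inf' hFne hAw_cont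
      have hM2cont : ContinuousOn M2 (Set.Icc t0 n) := continuousOn_finset_inf' hFne hBw_cont
      have hAfcont : ContinuousOn (fun t => A f t) (Set.Icc t0 n) :=
        (hA_cont f).mono hsubset
      have hBfcont : ContinuousOn (fun t => B f t) (Set.Icc t0 n) :=
        (hB_cont f).mono hsubset
      have hDcont : ContinuousOn Df (Set.Icc t0 n) :=
        ((hAfcont.add hBfcont).sub hAmcont).sub hM2cont
      have ht0mem : t0 ∈ Set.Icc t0 n := ⟨le_rfl, ht0lt.le⟩
      -- identification at t0
      have hsumF0 : ∑ e ∈ F, s0 e = n - t0 := by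
        have := Finset.add_sum_erase Finset.univ s0 (Finset.mem_univ f)
        rw [hs0sum] at this
        rw [hF]
        linarith
      have hwt0 : ∀ e ∈ F, w t0 e = s0 e := by
        apply ward_unique hsmF (fun e _ => hwnn t0 e) (fun e _ => hs0nn e)
        · rw [hwsum t0 ht0mem, hsumF0]
        · intro e he hpos d hd
          exact hwWard t0 ht0mem e he hpos d hd
        · intro e _ hpos d _
          exact hWard₀ e hpos d
      have hocc0 : ∃ e ∈ F, 0 < s0 e := by
        by_contra hall
        push_neg at hall
        have : ∑ e ∈ F, s0 e ≤ 0 := Finset.sum_nonpos hall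
        rw [hsumF0] at this
        linarith
      obtain ⟨e0, he0F, he0pos⟩ := hocc0
      have hAf_t0 : A f t0 = lam0 := le_antisymm (hW1₀ f hf_occ) (hW2₀ f)
      have hAm_t0 : Am t0 = lam0 := by
        apply le_antisymm
        · refine le_trans (Finset.inf'_le _ he0F) ?_
          rw [hwt0 e0 he0F]
          exact hW1₀ e0 he0pos
        · apply Finset.le_inf'
          intro d hd
          rw [hwt0 d hd]
          exact hW2₀ d
      have hM2_t0 : B f t0 < M2 t0 := by
        rw [hM2]
        apply (Finset.lt_inf'_iff hFne).mpr
        intro d hd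
        rw [hwt0 d hd]
        exact hstrict d (Finset.mem_erase.mp hd).1
      have hDt0 : Df t0 < 0 := by
        simp only [hDf]
        rw [hAf_t0, hAm_t0]
        linarith
      -- the builder
      have builder : ∀ t', t' ∈ Set.Icc t0 n → Df t' ≤ 0 →
          ((∃ e ∈ F, 0 < w t' e) → 0 ≤ Df t') → B f t' ≤ M2 t' →
          ∃ s : E → ℝ, (∀ e, 0 ≤ s e) ∧ ∑ e, s e = n ∧
            ∀ e, 0 < s e → ∀ d, WCR c r s e ≤ WCR c r s d := by
        intro t' ht' hDle hDge hbm2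
        set s' : E → ℝ := fun e => if e = f then t' else w t' e with hs'
        have hs'f : s' f = t' := by simp [hs']
        have hs'e : ∀ e, e ≠ f → s' e = w t' e := by
          intro e he; simp [hs', he]
        have ht'pos : 0 < t' := lt_of_lt_of_le hf_occ ht'.1
        have hs'nn : ∀ e, 0 ≤ s' e := by
          intro e
          by_cases hef : e = f
          · rw [hef, hs'f]; exact ht'pos.le
          · rw [hs'e e hef]; exact hwnn t' e
        have hs'sum : ∑ e, s' e = n := by
          have h1 : s' f + ∑ e ∈ F, s' e = ∑ e, s' e := by
            rw [hF]; exact Finset.add_sum_erase _ _ (Finset.mem_univ f)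
          have h2 : ∑ e ∈ F, s' e = ∑ e ∈ F, w t' e :=
            Finset.sum_congr rfl (fun e he => hs'e e (Finset.mem_erase.mp he).1)
          rw [← h1, h2, hwsum t' ht', hs'f]
          ring
        have hmuf : (⨅ d : { d : E // d ≠ f }, c d.1 (s' d.1 / r)) = M2 t' := by
          rw [iInf_ne_eq_inf'_erase f (fun d => c d (s' d / r)) hFne]
          rw [hM2]
          apply Finset.inf'_congr hFne rfl
          intro d hd
          rw [hs'e d (Finset.mem_erase.mp hd).1]
        refine ⟨s', hs'nn, hs'sum, ?_⟩
        apply verify_eq hE r c s' f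
        · -- C1
          intro e hef hepos d hdf
          have heF : e ∈ F := Finset.mem_erase.mpr ⟨hef, Finset.mem_univ e⟩
          have hdF : d ∈ F := Finset.mem_erase.mpr ⟨hdf, Finset.mem_univ d⟩
          have hepos' : 0 < w t' e := by rw [← hs'e e hef]; exact hepos
          have := hwWard t' ht' e heF hepos' d hdF
          rw [hs'e e hef, hs'e d hdf]
          exact this
        · -- C2
          intro e hef
          have heF : e ∈ F := Finset.mem_erase.mpr ⟨hef, Finset.mem_univ e⟩
          have h1 : M2 t' ≤ B e (w t' e) := Finset.inf'_le _ heF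
          rw [hs'f, hs'e e hef]
          exact le_trans hbm2 h1
        · -- C3
          intro e hef hepos
          have heF : e ∈ F := Finset.mem_erase.mpr ⟨hef, Finset.mem_univ e⟩
          have hepos' : 0 < w t' e := by rw [← hs'e e hef]; exact hepos
          have hDge' : 0 ≤ Df t' := hDge ⟨e, heF, hepos'⟩
          have hAe : A e (w t' e) ≤ Am t' := by
            rw [hAm]
            apply Finset.le_inf'
            intro d hd
            exact hwWard t' ht' e heF hepos' d hd
          rw [hmuf, hs'e e hef, hs'f]
          simp only [hDf] at hDge'
          have : A e (w t' e) + M2 t' ≤ A f t' + B f t' := by linarith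
          exact this
        · -- C4
          intro hfpos d hdf
          have hdF : d ∈ F := Finset.mem_erase.mpr ⟨hdf, Finset.mem_univ d⟩
          have h1 : Am t' ≤ A d (w t' d) := Finset.inf'_le _ hdF
          rw [hmuf, hs'f, hs'e d hdf]
          simp only [hDf] at hDle
          have : A f t' + B f t' ≤ A d (w t' d) + M2 t' := by linarith
          exact this
      -- case analysis on ties between B f and M2
      by_cases hSB : {t | t ∈ Set.Icc t0 n ∧ M2 t ≤ B f t}.Nonempty
      · have hSBclosed : IsClosed {t | t ∈ Set.Icc t0 n ∧ M2 t ≤ B f t} := by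
          have heq : {t | t ∈ Set.Icc t0 n ∧ M2 t ≤ B f t}
              = Set.Icc t0 n ∩ (fun t => M2 t - B f t) ⁻¹' Set.Iic 0 := by
            ext t
            simp only [Set.mem_setOf_eq, Set.mem_inter_iff, Set.mem_preimage, Set.mem_Iic,
              sub_nonpos]
          rw [heq]
          exact (hM2cont.sub hBfcont).preimage_isClosed_of_isClosed isClosed_Icc isClosed_Iic
        have hSBbdd : BddBelow {t | t ∈ Set.Icc t0 n ∧ M2 t ≤ B f t} :=
          ⟨t0, fun x hx => hx.1.1⟩
        set ts := sInf {t | t ∈ Set.Icc t0 n ∧ M2 t ≤ B f t} with hts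
        have htsmem : ts ∈ {t | t ∈ Set.Icc t0 n ∧ M2 t ≤ B f t} :=
          hSBclosed.csInf_mem hSB hSBbdd
        have hts0 : t0 < ts := by
          rcases lt_or_eq_of_le htsmem.1.1 with h | h
          · exact h
          · exfalso; rw [← h] at htsmem; linarith [htsmem.2, hM2_t0]
        have hlow : ∀ t, t ∈ Set.Ico t0 ts → B f t < M2 t := by
          intro t ht
          have htmem : t ∈ Set.Icc t0 n := ⟨ht.1, le_trans ht.2.le htsmem.1.2⟩
          by_contra hcon
          push_neg at hcon
          have : ts ≤ t := csInf_le hSBbdd ⟨htmem, hcon⟩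
          linarith [ht.2]
        have hBfM2ts : B f ts = M2 ts := by
          refine le_antisymm ?_ htsmem.2
          have hKclosed : IsClosed {t | t ∈ Set.Icc t0 n ∧ B f t - M2 t ≤ 0} := by
            have heq : {t | t ∈ Set.Icc t0 n ∧ B f t - M2 t ≤ 0}
                = Set.Icc t0 n ∩ (fun t => B f t - M2 t) ⁻¹' Set.Iic 0 := by
              ext t
              simp only [Set.mem_setOf_eq, Set.mem_inter_iff, Set.mem_preimage, Set.mem_Iic]
            rw [heq]
            exact (hBfcont.sub hM2cont).preimage_isClosed_of_isClosed isClosed_Icc isClosed_Iic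
          have hIco : Set.Ico t0 ts ⊆ {t | t ∈ Set.Icc t0 n ∧ B f t - M2 t ≤ 0} := by
            intro t ht
            exact ⟨⟨ht.1, le_trans ht.2.le htsmem.1.2⟩, by linarith [hlow t ht]⟩
          have hsub : Set.Icc t0 ts ⊆ {t | t ∈ Set.Icc t0 n ∧ B f t - M2 t ≤ 0} := by
            rw [← closure_Ico (ne_of_lt hts0)]
            exact closure_minimal hIco hKclosed
          have := (hsub ⟨hts0.le, le_rfl⟩).2
          linarith
        have hDts : 0 ≤ Df ts := by
          by_cases htsn : ts = n
          · have hw0 : ∀ e ∈ F, w n e = 0 := by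
              have hsum0 : ∑ e ∈ F, w n e = 0 := by
                rw [hwsum n ⟨ht0lt.le, le_rfl⟩]; ring
              intro e he
              exact (Finset.sum_eq_zero_iff_of_nonneg (fun d _ => hwnn n d)).mp hsum0 e he
            have hAmM2 : Am n = M2 n := by
              rw [hAm, hM2]
              apply Finset.inf'_congr hFne rfl
              intro d hd
              rw [hw0 d hd]
              simp [hA, hB]
            have hBAf : B f n ≤ A f n := hBA f n hn.le
            rw [htsn] at hBfM2ts ⊢
            simp only [hDf]
            rw [hAmM2]
            linarith [hBfM2ts]
          · have htsltn : ts < n := lt_of_le_of_ne htsmem.1.2 htsn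
            have hocc : ∃ e1 ∈ F, 0 < w ts e1 := by
              by_contra hall
              push_neg at hall
              have h1 : ∑ e ∈ F, w ts e ≤ 0 := Finset.sum_nonpos hall
              rw [hwsum ts htsmem.1] at h1
              linarith
            obtain ⟨e1, he1F, he1pos⟩ := hocc
            have hle1 : w ts e1 ≤ w t0 e1 := hwmono t0 ts le_rfl htsmem.1.1 htsmem.1.2 e1
            have hwt0e1 : w t0 e1 = s0 e1 := hwt0 e1 he1F
            have hs0e1pos : 0 < s0 e1 := by rw [← hwt0e1]; linarith
            have h1 : A e1 (w ts e1) ≤ A e1 (s0 e1) := by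
              apply (hA_sm e1).monotoneOn (Set.mem_Ici.mpr (hwnn ts e1))
                (Set.mem_Ici.mpr (hs0nn e1))
              rw [← hwt0e1]; exact hle1
            have h2 : A e1 (s0 e1) ≤ lam0 := hW1₀ e1 hs0e1pos
            have hAmts : Am ts ≤ lam0 := le_trans (Finset.inf'_le _ he1F) (by linarith)
            have hAfts : lam0 ≤ A f ts := by
              rw [← hAf_t0]
              exact (hA_sm f).monotoneOn (Set.mem_Ici.mpr hf_occ.le)
                (Set.mem_Ici.mpr (le_trans hf_occ.le htsmem.1.1)) htsmem.1.1
            simp only [hDf]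
            linarith [hBfM2ts]
        -- intermediate value theorem on [t0, ts]
        have hIccsub : Set.Icc t0 ts ⊆ Set.Icc t0 n := Set.Icc_subset_Icc le_rfl htsmem.1.2
        obtain ⟨tz, htzmem, htz⟩ := intermediate_value_Icc hts0.le (hDcont.mono hIccsub)
          (Set.mem_Icc.mpr ⟨hDt0.le, hDts⟩)
        have htzIcc : tz ∈ Set.Icc t0 n := hIccsub htzmem
        apply builder tz htzIcc (le_of_eq htz) (fun _ => ge_of_eq htz)
        rcases lt_or_eq_of_le htzmem.2 with hlt | heq
        · exact (hlow tz ⟨htzmem.1, hlt⟩).le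
        · rw [heq]; exact le_of_eq hBfM2ts
      · -- no tie on the whole interval
        have hβ : ∀ t ∈ Set.Icc t0 n, B f t < M2 t := by
          intro t ht
          by_contra hcon
          push_neg at hcon
          exact hSB ⟨t, ht, hcon⟩
        by_cases hzero : ∃ tz ∈ Set.Icc t0 n, Df tz = 0
        · obtain ⟨tz, htz, hDz⟩ := hzero
          exact builder tz htz hDz.le (fun _ => hDz.ge) (hβ tz htz).le
        · have hDn : Df n ≤ 0 := by
            by_contra hpos
            push_neg at hpos
            obtain ⟨tz, htz, h0⟩ := intermediate_value_Icc ht0lt.le hDcont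
              (Set.mem_Icc.mpr ⟨hDt0.le, hpos.le⟩)
            exact hzero ⟨tz, htz, h0⟩
          apply builder n ⟨ht0lt.le, le_rfl⟩ hDn ?_ (hβ n ⟨ht0lt.le, le_rfl⟩).le
          rintro ⟨e, heF, hpos⟩
          have hsum0 : ∑ e ∈ F, w n e = 0 := by
            rw [hwsum n ⟨ht0lt.le, le_rfl⟩]; ring
          have : w n e = 0 :=
            (Finset.sum_eq_zero_iff_of_nonneg (fun d _ => hwnn n d)).mp hsum0 e heF
          linarith

end MAIN



/-- In an RSG with `|E| ≥ 2`, total mass `n > 0`, uncertainty `r ≥ 1` and continuous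
nondecreasing nonnegative cost functions, a WCR equilibrium exists: a state in which every
occupied resource has worst-case regret no larger than that of any other resource. -/
theorem stmt_16 {E : Type} [Fintype E] [DecidableEq E] (hE : 2 ≤ Fintype.card E)
    (n : ℝ) (hn : 0 < n) (r : ℝ) (hr : 1 ≤ r)
    (c : E → ℝ → ℝ)
    (hc_nonneg : ∀ e t, 0 ≤ t → 0 ≤ c e t)
    (hc_cont : ∀ e, ContinuousOn (c e) (Set.Ici 0))
    (hc_mono : ∀ e, MonotoneOn (c e) (Set.Ici 0)) :
    ∃ s : E → ℝ, (∀ e, 0 ≤ s e) ∧ ∑ e, s e = n ∧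
      ∀ e, 0 < s e → ∀ d, WCR c r s e ≤ WCR c r s d := by
  classical
  haveI : Nontrivial E := Fintype.one_lt_card_iff_nontrivial.mp (by omega)
  have hr0 : (0:ℝ) < r := lt_of_lt_of_le one_pos hr
  set ck : ℕ → E → ℝ → ℝ := fun k e x => c e x + x / ((k:ℝ) + 1) with hck
  have hkpos : ∀ k : ℕ, (0:ℝ) < (k:ℝ) + 1 := by
    intro k; positivity
  have hck_cont : ∀ k e, ContinuousOn (ck k e) (Set.Ici 0) := by
    intro k e
    exact (hc_cont e).add (continuous_id.div_const _).continuousOn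
  have hck_sm : ∀ k e, StrictMonoOn (ck k e) (Set.Ici 0) := by
    intro k e x hx y hy hxy
    have h1 : c e x ≤ c e y := hc_mono e hx hy hxy.le
    have h2 : x / ((k:ℝ)+1) < y / ((k:ℝ)+1) := (div_lt_div_iff_of_pos_right (hkpos k)).mpr hxy
    simp only [hck]
    exact add_lt_add_of_le_of_lt h1 h2
  choose sk hsk using fun k =>
    aux_strict hE n hn r hr (ck k) (hck_cont k) (hck_sm k)
  have hskn : ∀ k e, sk k e ≤ n := by
    intro k e
    have h1 : sk k e ≤ ∑ d, sk k d :=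
      Finset.single_le_sum (fun d _ => (hsk k).1 d) (Finset.mem_univ e)
    rw [(hsk k).2.1] at h1
    exact h1
  have hmem : ∀ k, sk k ∈ Set.Icc (fun _ : E => (0:ℝ)) (fun _ : E => n) := by
    intro k
    rw [Set.mem_Icc]
    exact ⟨fun e => (hsk k).1 e, fun e => hskn k e⟩
  obtain ⟨a, hamem, φ, hφmono, hφtend⟩ :=
    (isCompact_Icc (a := fun _ : E => (0:ℝ)) (b := fun _ : E => n)).tendsto_subseq hmem
  have hcoord : ∀ e, Filter.Tendsto (fun k => sk (φ k) e) Filter.atTop (nhds (a e)) := by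
    intro e
    exact ((continuous_apply e).tendsto a).comp hφtend
  have hann : ∀ e, 0 ≤ a e := fun e => (Set.mem_Icc.mp hamem).1 e
  have hφatTop : Filter.Tendsto φ Filter.atTop Filter.atTop := hφmono.tendsto_atTop
  have hinv : Filter.Tendsto (fun k => ((φ k : ℝ) + 1)⁻¹) Filter.atTop (nhds 0) := by
    have h1 : Filter.Tendsto (fun m : ℕ => ((m:ℝ) + 1)⁻¹) Filter.atTop (nhds 0) := by
      exact tendsto_one_div_add_atTop_nhds_zero_nat.congr (fun m => one_div _)
    exact h1.comp hφatTop
  -- key limit lemma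
  have keylim : ∀ (x : E) (v : ℕ → ℝ) (vl : ℝ), (∀ k, 0 ≤ v k) →
      Filter.Tendsto v Filter.atTop (nhds vl) →
      Filter.Tendsto (fun k => c x (v k) + (v k) / ((φ k : ℝ) + 1))
        Filter.atTop (nhds (c x vl)) := by
    intro x v vl hvnn hvt
    have hvl : 0 ≤ vl := ge_of_tendsto hvt (Filter.Eventually.of_forall hvnn)
    have h2 : Filter.Tendsto v Filter.atTop (nhdsWithin vl (Set.Ici 0)) :=
      tendsto_nhdsWithin_iff.mpr ⟨hvt, Filter.Eventually.of_forall fun k => hvnn k⟩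
    have hc1 : Filter.Tendsto (fun k => c x (v k)) Filter.atTop (nhds (c x vl)) :=
      ((hc_cont x vl hvl).tendsto).comp h2
    have hdiv : Filter.Tendsto (fun k => (v k) / ((φ k : ℝ) + 1))
        Filter.atTop (nhds 0) := by
      have := hvt.mul hinv
      rw [mul_zero] at this
      simpa [div_eq_mul_inv] using this
    simpa using hc1.add hdiv
  refine ⟨a, hann, ?_, ?_⟩
  · have h1 : Filter.Tendsto (fun k => ∑ e, sk (φ k) e) Filter.atTop (nhds (∑ e, a e)) :=
      tendsto_finset_sum _ (fun e _ => hcoord e)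
    have h2 : (fun k => ∑ e, sk (φ k) e) = fun _ => n :=
      funext fun k => (hsk (φ k)).2.1
    rw [h2] at h1
    exact tendsto_nhds_unique h1 tendsto_const_nhds
  · intro e hepos d
    have hconv : ∀ x : E, Filter.Tendsto (fun k => WCR (ck (φ k)) r (sk (φ k)) x)
        Filter.atTop (nhds (WCR c r a x)) := by
      intro x
      haveI : Nonempty { d : E // d ≠ x } := by
        obtain ⟨d', hd'⟩ := exists_ne x
        exact ⟨⟨d', hd'⟩⟩
      simp only [WCR]
      apply Filter.Tendsto.sub
      · have := keylim x (fun k => r * sk (φ k) x) (r * a x)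
          (fun k => mul_nonneg hr0.le ((hsk (φ k)).1 x)) ((hcoord x).const_mul r)
        simpa [hck, mul_div_assoc] using this
      · have hre : (⨅ d : { d : E // d ≠ x }, c d.1 (a d.1 / r))
            = Finset.univ.inf' Finset.univ_nonempty
              (fun d : { d : E // d ≠ x } => c d.1 (a d.1 / r)) := iInf_eq_inf' _
        have hre2 : (fun k => ⨅ d : { d : E // d ≠ x }, ck (φ k) d.1 (sk (φ k) d.1 / r))
            = fun k => Finset.univ.inf' Finset.univ_nonempty
              (fun d : { d : E // d ≠ x } => ck (φ k) d.1 (sk (φ k) d.1 / r)) :=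
          funext fun k => iInf_eq_inf' _
        rw [hre, hre2]
        apply tendsto_finset_inf'
        intro dd _
        have := keylim dd.1 (fun k => sk (φ k) dd.1 / r) (a dd.1 / r)
          (fun k => div_nonneg ((hsk (φ k)).1 dd.1) hr0.le) ((hcoord dd.1).div_const r)
        simpa [hck, div_div] using this
    have hposk : ∀ᶠ k in Filter.atTop, 0 < sk (φ k) e :=
      (hcoord e).eventually (eventually_gt_nhds hepos)
    have hineq : ∀ᶠ k in Filter.atTop,
        WCR (ck (φ k)) r (sk (φ k)) e ≤ WCR (ck (φ k)) r (sk (φ k)) d :=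
      hposk.mono fun k hk => (hsk (φ k)).2.2 e hk d
    exact le_of_tendsto_of_tendsto (hconv e) (hconv d) hineq
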